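/- Expansion of level sets of a faithful Haar system: let (b_J)_{J∈𝒟_{≤n}} be a finite faithful Haar system, and for J ∈ 𝒟_n set Γ_{J^±} = [b_J = ±1], and Γ_{[0,1)} understood via the recursion so that for I ∈ 𝒟_{n+1}, Γ_I is the corresponding level set. Then for every I ∈ 𝒟_{n+1}, χ_{Γ_I} = |I| χ_{[0,1)} + Σ_{J∈𝒟_{≤n}, J⊇I} (|I|/|J|) h_J(I) b_J, where h_J(I) denotes the constant value of the Haar function h_J on I. -/

import Mathlib

open MeasureTheory

/-- The dyadic interval `[i / 2 ^ n, (i + 1) / 2 ^ n) ⊆ [0,1)`. -/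
noncomputable def dyadicI (n i : ℕ) : Set ℝ :=
  Set.Ico ((i : ℝ) / 2 ^ n) ((i + 1 : ℝ) / 2 ^ n)

/-- The Haar function `h_I = χ_{I⁺} - χ_{I⁻}` for `I = [i / 2 ^ n, (i + 1) / 2 ^ n)`. -/
noncomputable def haarF (n i : ℕ) : ℝ → ℝ := fun t =>
  (Set.Ico ((2 * i : ℝ) / 2 ^ (n + 1)) ((2 * i + 1 : ℝ) / 2 ^ (n + 1))).indicator
      (fun _ => (1 : ℝ)) t -
    (Set.Ico ((2 * i + 1 : ℝ) / 2 ^ (n + 1)) ((2 * i + 2 : ℝ) / 2 ^ (n + 1))).indicator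
      (fun _ => (1 : ℝ)) t

/-- The iterated level sets `Γ_I` of a system `(b_J)`: `Γ_{[0,1)} = [0,1)` and
`Γ_{I^±} = Γ_I ∩ [b_I = ±1]` (the index `i` at level `j + 1` has parent `i / 2`,
and `i` even means left half, sign `+1`). -/
def levelSet (b : ℕ → ℕ → ℝ → ℝ) : ℕ → ℕ → Set ℝ
  | 0, _ => Set.Ico (0 : ℝ) 1
  | j + 1, i =>
      levelSet b j (i / 2) ∩ {t | b j (i / 2) t = if i % 2 = 0 then 1 else -1}

lemma dyadicI_eq (n i : ℕ) :
    dyadicI n i = Set.Ico ((2 * i : ℝ) / 2 ^ (n + 1)) ((2 * i + 2 : ℝ) / 2 ^ (n + 1)) := by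
  unfold dyadicI
  have h2 : (2 : ℝ) ^ (n + 1) = 2 * 2 ^ n := by ring
  have hne : (2 : ℝ) ≠ 0 := two_ne_zero
  rw [h2, mul_div_mul_left _ _ hne,
    show ((2 * i + 2 : ℝ)) = 2 * (i + 1) by ring, mul_div_mul_left _ _ hne]

lemma haarF_eq_zero {n i : ℕ} {t : ℝ} (h : t ∉ dyadicI n i) : haarF n i t = 0 := by
  rw [dyadicI_eq, Set.mem_Ico, not_and_or, not_le, not_lt] at h
  have hp : (0 : ℝ) < 2 ^ (n + 1) := by positivity
  have key1 : ((2 * i : ℝ)) / 2 ^ (n + 1) ≤ (2 * i + 1 : ℝ) / 2 ^ (n + 1) := by gcongr; linarith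
  have key2 : ((2 * i + 1 : ℝ)) / 2 ^ (n + 1) ≤ (2 * i + 2 : ℝ) / 2 ^ (n + 1) := by gcongr; linarith
  unfold haarF
  rw [Set.indicator_of_notMem, Set.indicator_of_notMem, sub_zero]
  · rw [Set.mem_Ico]; rcases h with h | h
    · intro ⟨h1, _⟩; linarith
    · intro ⟨_, h2⟩; linarith
  · rw [Set.mem_Ico]; rcases h with h | h
    · intro ⟨h1, _⟩; linarith
    · intro ⟨_, h2⟩; linarith

lemma haarF_pm {n i : ℕ} {t : ℝ} (h : t ∈ dyadicI n i) : haarF n i t = 1 ∨ haarF n i t = -1 := by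
  rw [dyadicI_eq, Set.mem_Ico] at h
  unfold haarF
  rcases lt_or_ge t ((2 * i + 1 : ℝ) / 2 ^ (n + 1)) with hc | hc
  · left
    rw [Set.indicator_of_mem, Set.indicator_of_notMem, sub_zero]
    · rw [Set.mem_Ico]; intro ⟨h1, _⟩; linarith
    · exact ⟨h.1, hc⟩
  · right
    rw [Set.indicator_of_notMem, Set.indicator_of_mem, zero_sub]
    · exact ⟨hc, h.2⟩
    · rw [Set.mem_Ico]; intro ⟨_, h2⟩; linarith


/-- Expansion of the level sets of a finite faithful Haar system `(b_J)_{J ∈ 𝒟_{≤ n}}`: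
for every `I ∈ 𝒟_{n+1}`,
`χ_{Γ_I} = |I| χ_{[0,1)} + Σ_{J ∈ 𝒟_{≤ n}, J ⊇ I} (|I|/|J|) h_J(I) b_J`,
where `h_J(I)` is the constant value of `h_J` on `I`.  Here the ancestor of `I` (index
`i < 2 ^ (n+1)`) at level `j` has index `i / 2 ^ (n + 1 - j)`, `|I|/|J| = 2^j / 2^(n+1)`,
and `h_J(I) = 1` iff `i / 2 ^ (n - j)` is even. -/
theorem faithful_levelSet_expansion
    (n : ℕ) (𝓑 : ℕ → ℕ → Finset (ℕ × ℕ)) (θ : ℕ × ℕ → ℝ)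
    (b : ℕ → ℕ → ℝ → ℝ)
    (hθ : ∀ p, θ p = 1 ∨ θ p = -1)
    (hvalid : ∀ j ≤ n, ∀ i < 2 ^ j, ∀ p ∈ 𝓑 j i, p.2 < 2 ^ p.1)
    (hdisjoint_within : ∀ j ≤ n, ∀ i < 2 ^ j, ∀ p ∈ 𝓑 j i, ∀ q ∈ 𝓑 j i, p ≠ q →
      Disjoint (dyadicI p.1 p.2) (dyadicI q.1 q.2))
    (hdisjoint_between : ∀ j ≤ n, ∀ i < 2 ^ j, ∀ j' ≤ n, ∀ i' < 2 ^ j',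
      (j, i) ≠ (j', i') → 𝓑 j i ∩ 𝓑 j' i' = ∅)
    (hdef : ∀ j ≤ n, ∀ i < 2 ^ j,
      b j i = fun t => ∑ p ∈ 𝓑 j i, θ p * haarF p.1 p.2 t)
    (hroot : (⋃ p ∈ 𝓑 0 0, dyadicI p.1 p.2) = Set.Ico (0 : ℝ) 1)
    (hfaithful : ∀ j < n, ∀ i < 2 ^ j,
      ((⋃ p ∈ 𝓑 (j + 1) (2 * i), dyadicI p.1 p.2) = {t | b j i t = 1}) ∧
      ((⋃ p ∈ 𝓑 (j + 1) (2 * i + 1), dyadicI p.1 p.2) = {t | b j i t = -1})) :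
    ∀ i < 2 ^ (n + 1), ∀ t : ℝ,
      (levelSet b (n + 1) i).indicator (fun _ => (1 : ℝ)) t =
        ((1 : ℝ) / 2 ^ (n + 1)) * (Set.Ico (0 : ℝ) 1).indicator (fun _ => (1 : ℝ)) t +
        ∑ j ∈ Finset.range (n + 1),
          ((2 : ℝ) ^ j / 2 ^ (n + 1)) *
            (if (i / 2 ^ (n - j)) % 2 = 0 then (1 : ℝ) else -1) *
            b j (i / 2 ^ (n + 1 - j)) t := by
  -- b vanishes off the union of its support intervals
  have bzero : ∀ j ≤ n, ∀ i < 2 ^ j, ∀ t : ℝ,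
      t ∉ (⋃ p ∈ 𝓑 j i, dyadicI p.1 p.2) → b j i t = 0 := by
    intro j hj i hi t ht
    rw [hdef j hj i hi]
    apply Finset.sum_eq_zero
    intro p hp
    rw [haarF_eq_zero, mul_zero]
    exact fun hmem => ht (Set.mem_biUnion hp hmem)
  -- b takes values ±1 on the union
  have bpm : ∀ j ≤ n, ∀ i < 2 ^ j, ∀ t : ℝ,
      t ∈ (⋃ p ∈ 𝓑 j i, dyadicI p.1 p.2) → b j i t = 1 ∨ b j i t = -1 := by
    intro j hj i hi t ht
    rw [Set.mem_iUnion₂] at ht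
    obtain ⟨p, hp, hpt⟩ := ht
    rw [hdef j hj i hi]
    simp only []
    rw [Finset.sum_eq_single p]
    · rcases haarF_pm hpt with h | h <;> rcases hθ p with h' | h' <;>
        rw [h, h'] <;> norm_num
    · intro q hq hne
      rw [haarF_eq_zero, mul_zero]
      intro hqt
      exact Set.disjoint_left.mp
        (hdisjoint_within j hj i hi q hq p hp hne) hqt hpt
    · intro h; exact absurd hp h
  -- the level sets are the unions of the support intervals
  have key : ∀ j ≤ n, ∀ i < 2 ^ j,
      levelSet b j i = ⋃ p ∈ 𝓑 j i, dyadicI p.1 p.2 := by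
    intro j
    induction j with
    | zero =>
      intro _ i hi
      interval_cases i
      exact hroot.symm
    | succ j IH =>
      intro hj i hi
      have hj' : j ≤ n := by omega
      have hi2 : i / 2 < 2 ^ j := by
        have : 2 ^ (j + 1) = 2 * 2 ^ j := by ring
        omega
      have hIH := IH hj' (i / 2) hi2
      have hsub : ∀ e : ℝ, e ≠ 0 →
          {t | b j (i / 2) t = e} ⊆ ⋃ p ∈ 𝓑 j (i / 2), dyadicI p.1 p.2 := by
        intro e he t ht
        by_contra hc
        exact he (ht.symm.trans (bzero j hj' (i / 2) hi2 t hc))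
      have hfa := hfaithful j (by omega) (i / 2) hi2
      show (levelSet b j (i / 2) ∩
          {t | b j (i / 2) t = if i % 2 = 0 then 1 else -1}) = _
      have h2i : 2 * (i / 2) + i % 2 = i := by omega
      rcases Nat.mod_two_eq_zero_or_one i with h2 | h2
      · rw [if_pos h2, hIH,
          Set.inter_eq_right.mpr (hsub 1 one_ne_zero), ← hfa.1]
        rw [h2, Nat.add_zero] at h2i
        rw [h2i]
      · rw [if_neg (by omega : ¬ i % 2 = 0), hIH,
          Set.inter_eq_right.mpr (hsub (-1) (by norm_num)), ← hfa.2]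
        rw [h2] at h2i
        rw [h2i]
  -- pointwise recursion
  have recur : ∀ j ≤ n, ∀ i < 2 ^ (j + 1), ∀ t : ℝ,
      (levelSet b (j + 1) i).indicator (fun _ => (1 : ℝ)) t =
        (1 / 2) * (levelSet b j (i / 2)).indicator (fun _ => (1 : ℝ)) t +
        ((if i % 2 = 0 then (1 : ℝ) else -1) / 2) * b j (i / 2) t := by
    intro j hj i hi t
    have hi2 : i / 2 < 2 ^ j := by
      have : 2 ^ (j + 1) = 2 * 2 ^ j := by ring
      omega
    have hkey := key j hj (i / 2) hi2
    have hL : levelSet b (j + 1) i =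
        levelSet b j (i / 2) ∩ {t | b j (i / 2) t = if i % 2 = 0 then 1 else -1} := rfl
    set e : ℝ := if i % 2 = 0 then (1 : ℝ) else -1 with he
    have hepm : e = 1 ∨ e = -1 := by
      rcases Nat.mod_two_eq_zero_or_one i with h2 | h2 <;>
        simp [he, h2]
    by_cases ht : t ∈ levelSet b j (i / 2)
    · by_cases hbe : b j (i / 2) t = e
      · rw [hL, Set.indicator_of_mem (show t ∈ levelSet b j (i / 2) ∩ {s | b j (i / 2) s = e} from ⟨ht, hbe⟩), Set.indicator_of_mem ht, hbe]
        rcases hepm with hee | hee <;> rw [hee] <;> norm_num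
      · rw [hL, Set.indicator_of_notMem (fun h => hbe h.2), Set.indicator_of_mem ht]
        rcases bpm j hj (i / 2) hi2 t (hkey ▸ ht) with hb | hb <;>
          rcases hepm with hee | hee
        · exact absurd (hb.trans hee.symm) hbe
        · rw [hb, hee]; norm_num
        · rw [hb, hee]; norm_num
        · exact absurd (hb.trans hee.symm) hbe
    · have hb0 : b j (i / 2) t = 0 := bzero j hj (i / 2) hi2 t (hkey ▸ ht)
      rw [hL, Set.indicator_of_notMem ht, Set.indicator_of_notMem (fun h => ht h.1), hb0]
      ring
  have main : ∀ m, m ≤ n + 1 → ∀ i < 2 ^ m, ∀ t : ℝ,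
      (levelSet b m i).indicator (fun _ => (1 : ℝ)) t =
        ((1 : ℝ) / 2 ^ m) * (Set.Ico (0 : ℝ) 1).indicator (fun _ => (1 : ℝ)) t +
        ∑ j ∈ Finset.range m,
          ((2 : ℝ) ^ j / 2 ^ m) *
            (if (i / 2 ^ (m - 1 - j)) % 2 = 0 then (1 : ℝ) else -1) *
            b j (i / 2 ^ (m - j)) t := by
    intro m
    induction m with
    | zero =>
      intro _ i hi t
      interval_cases i
      simp [levelSet]
    | succ m IH =>
      intro hm i hi t
      have hm' : m ≤ n := by omega
      have hi2 : i / 2 < 2 ^ m := by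
        have : 2 ^ (m + 1) = 2 * 2 ^ m := by ring
        omega
      have hsum : (∑ j ∈ Finset.range m,
            (1 : ℝ) / 2 * ((2 : ℝ) ^ j / 2 ^ m *
              (if (i / 2 / 2 ^ (m - 1 - j)) % 2 = 0 then (1 : ℝ) else -1) *
              b j (i / 2 / 2 ^ (m - j)) t))
          = ∑ j ∈ Finset.range m,
            (2 : ℝ) ^ j / 2 ^ (m + 1) *
              (if (i / 2 ^ (m + 1 - 1 - j)) % 2 = 0 then (1 : ℝ) else -1) *
              b j (i / 2 ^ (m + 1 - j)) t := by
        apply Finset.sum_congr rfl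
        intro j hj
        have hjm : j < m := Finset.mem_range.mp hj
        have e3 : i / 2 / 2 ^ (m - j) = i / 2 ^ (m + 1 - j) := by
          rw [Nat.div_div_eq_div_mul, show m + 1 - j = (m - j) + 1 from by omega, pow_succ']
        have e4 : i / 2 / 2 ^ (m - 1 - j) = i / 2 ^ (m + 1 - 1 - j) := by
          rw [Nat.div_div_eq_div_mul, show m + 1 - 1 - j = (m - 1 - j) + 1 from by omega,
            pow_succ']
        rw [e3, e4, pow_succ]
        ring
      rw [recur m hm' i hi t, IH (by omega) (i / 2) hi2 t, Finset.sum_range_succ, mul_add,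
        Finset.mul_sum, hsum, show m + 1 - 1 - m = 0 from by omega,
        show m + 1 - m = 1 from by omega, pow_zero, pow_one, Nat.div_one]
      have c1 : (1 : ℝ) / 2 ^ (m + 1) = 1 / 2 * (1 / 2 ^ m) := by
        rw [pow_succ]; ring
      have c2 : (2 : ℝ) ^ m / 2 ^ (m + 1) = 1 / 2 := by
        have h2 : (2 : ℝ) ^ m ≠ 0 := by positivity
        field_simp [pow_succ]
        ring
      rw [c1, c2]
      ring
  intro i hi t
  exact main (n + 1) le_rfl i hi t
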